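/- Let p be an odd prime, α, β integers with gcd(p,α) = gcd(p,β) = 1, and n, m ≥ 1 with 2m < n. Then the polynomial f(x) = pⁿ + pᵐβx + αx², viewed as an element of ℤ[[x]], is reducible in ℤ[[x]]. -/

import Mathlib

open Finset
namespace Stmt5Aux

lemma hensel (P be al : ℤ) (d : ℕ) (hd : 1 ≤ d) (be' : ℤ) (hbe : P ∣ be * be' - 1) :
    ∀ j : ℕ, ∃ t : ℤ, P ^ j ∣ P ^ d * t ^ 2 - be * t + al := by
  intro j
  induction j with
  | zero => exact ⟨0, by simp⟩
  | succ j ih =>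
    obtain ⟨t, e, he⟩ := ih
    refine ⟨t + e * be' * P ^ j, ?_⟩
    have key : P ^ d * (t + e * be' * P ^ j) ^ 2 - be * (t + e * be' * P ^ j) + al
        = P ^ j * (e + (e * be') * (2 * P ^ d * t - be) + (e * be') ^ 2 * P ^ (j + d)) := by
      have hpow : P ^ (j + d) = P ^ j * P ^ d := pow_add P j d
      linear_combination he + (e * be') ^ 2 * P ^ j * hpow
    rw [key, pow_succ]
    refine mul_dvd_mul_left _ ?_
    have h1 : P ∣ P ^ d := dvd_pow_self P (by omega)
    have h2 : P ∣ P ^ (j + d) := dvd_pow_self P (by omega)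
    have hrw : e + (e * be') * (2 * P ^ d * t - be) + (e * be') ^ 2 * P ^ (j + d)
        = -e * (be * be' - 1) + (2 * e * be' * t) * P ^ d + (e * be') ^ 2 * P ^ (j + d) := by
      ring
    rw [hrw]
    exact dvd_add (dvd_add (hbe.mul_left _) (h1.mul_left _)) (h2.mul_left _)
def F (P : ℤ) (μ d : ℕ) (al be t w' : ℤ) : ℕ → ℤ × ℤ
  | 0 => (P ^ (μ + d), P ^ μ)
  | 1 => (be - P ^ d * t, t)
  | (n + 2) =>
    let T : ℤ := (if n = 0 then al else 0)
      - ∑ j ∈ (range (n + 1)).attach,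
          (F P μ d al be t w' (j.1 + 1)).1 * (F P μ d al be t w' (n + 1 - j.1)).2
    let S : ℤ := -(T / P ^ μ * t) - ∑ j ∈ (range n).attach,
          (F P μ d al be t w' (j.1 + 2)).1 * (F P μ d al be t w' (n + 1 - j.1)).2
    (T / P ^ μ - P ^ d * (w' * S), w' * S)
  termination_by k => k
  decreasing_by all_goals (have := mem_range.mp j.2; omega)

variable (P : ℤ) (μ d : ℕ) (al be t w' : ℤ)
def A (k : ℕ) : ℤ := (F P μ d al be t w' k).1
def B (k : ℕ) : ℤ := (F P μ d al be t w' k).2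
def fc (k : ℕ) : ℤ :=
  if k = 0 then P ^ (2 * μ + d) else if k = 1 then P ^ μ * be else if k = 2 then al else 0
def Tk (k : ℕ) : ℤ :=
  fc P μ d al be k - ∑ j ∈ range (k - 1), A P μ d al be t w' (j + 1) * B P μ d al be t w' (k - 1 - j)
def Sk (k : ℕ) : ℤ :=
  -(Tk P μ d al be t w' k / P ^ μ * t)
    - ∑ j ∈ range (k - 2), A P μ d al be t w' (j + 2) * B P μ d al be t w' (k - 1 - j)

lemma A0 : A P μ d al be t w' 0 = P ^ (μ + d) := by rw [A, F]
lemma B0 : B P μ d al be t w' 0 = P ^ μ := by rw [B, F]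
lemma A1 : A P μ d al be t w' 1 = be - P ^ d * t := by rw [A, F]
lemma B1 : B P μ d al be t w' 1 = t := by rw [B, F]

lemma fc2 (n : ℕ) : fc P μ d al be (n + 2) = if n = 0 then al else 0 := by
  rcases n with _ | n <;> simp [fc]

lemma B_eq (n : ℕ) : B P μ d al be t w' (n + 2) = w' * Sk P μ d al be t w' (n + 2) := by
  rw [B, F]
  simp only [Sk, Tk, fc2, A, B, Nat.add_sub_cancel]
  rw [Finset.sum_attach (range (n+1)) (fun j => (F P μ d al be t w' (j + 1)).1 * (F P μ d al be t w' (n + 1 - j)).2),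
      Finset.sum_attach (range n) (fun j => (F P μ d al be t w' (j + 2)).1 * (F P μ d al be t w' (n + 1 - j)).2)]
  norm_num

lemma A_eq (n : ℕ) : A P μ d al be t w' (n + 2)
    = Tk P μ d al be t w' (n + 2) / P ^ μ - P ^ d * B P μ d al be t w' (n + 2) := by
  rw [A, F, B_eq]
  simp only [Sk, Tk, fc2, A, B, Nat.add_sub_cancel]
  rw [Finset.sum_attach (range (n+1)) (fun j => (F P μ d al be t w' (j + 1)).1 * (F P μ d al be t w' (n + 1 - j)).2),
      Finset.sum_attach (range n) (fun j => (F P μ d al be t w' (j + 2)).1 * (F P μ d al be t w' (n + 1 - j)).2)]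
  norm_num

lemma Tk1 : Tk P μ d al be t w' 1 = P ^ μ * be := by simp [Tk, fc]

lemma Tk2 : Tk P μ d al be t w' 2 = al - (be - P ^ d * t) * t := by
  rw [Tk]
  norm_num [fc, Finset.sum_range_one, A1, B1]

lemma Tk_succ (n : ℕ) : Tk P μ d al be t w' (n + 3)
    = Sk P μ d al be t w' (n + 2) * (1 - (be - 2 * P ^ d * t) * w') := by
  have hfc : fc P μ d al be (n + 3) = 0 := by
    rw [show n + 3 = (n + 1) + 2 from rfl, fc2]; simp
  rw [Tk, hfc]
  rw [show n + 3 - 1 = n + 2 from rfl]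
  rw [Finset.sum_range_succ', Finset.sum_range_succ]
  have hidx : ∀ j ∈ range n,
      A P μ d al be t w' (j + 1 + 1) * B P μ d al be t w' (n + 2 - (j + 1))
      = A P μ d al be t w' (j + 2) * B P μ d al be t w' (n + 1 - j) := by
    intro j hj
    congr 2
    omega
  rw [Finset.sum_congr rfl hidx]
  rw [show n + 2 - (n + 1) = 1 from by omega, show n + 2 - 0 = n + 2 from by omega,
      show n + 1 + 1 = n + 2 from rfl, show 0 + 1 = 1 from rfl]
  rw [A_eq, B_eq, A1, B1, Sk]
  simp only [show n + 2 - 2 = n from rfl, show n + 2 - 1 = n + 1 from rfl]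
  ring

lemma dvd_Tk (ht : P ^ μ ∣ P ^ d * t ^ 2 - be * t + al)
    (hw : P ^ μ ∣ (be - 2 * P ^ d * t) * w' - 1) :
    ∀ k, 1 ≤ k → P ^ μ ∣ Tk P μ d al be t w' k := by
  intro k hk
  match k with
  | 1 => rw [Tk1]; exact dvd_mul_right _ _
  | 2 =>
    rw [Tk2, show al - (be - P ^ d * t) * t = P ^ d * t ^ 2 - be * t + al from by ring]
    exact ht
  | (n + 3) =>
    rw [Tk_succ, show (1 - (be - 2 * P ^ d * t) * w') = -((be - 2 * P ^ d * t) * w' - 1) from by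
      ring]
    exact Dvd.dvd.mul_left (dvd_neg.mpr hw) _

lemma key (ht : P ^ μ ∣ P ^ d * t ^ 2 - be * t + al)
    (hw : P ^ μ ∣ (be - 2 * P ^ d * t) * w' - 1) (k : ℕ) :
    ∑ j ∈ range (k + 1), A P μ d al be t w' j * B P μ d al be t w' (k - j)
      = fc P μ d al be k := by
  match k with
  | 0 =>
    rw [Finset.sum_range_one, Nat.sub_zero, A0, B0, fc, ← pow_add]
    norm_num
    congr 1
    omega
  | (n + 1) =>
    rw [Finset.sum_range_succ', Finset.sum_range_succ]
    have hT : ∑ i ∈ range n,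
        A P μ d al be t w' (i + 1) * B P μ d al be t w' (n + 1 - (i + 1))
        = fc P μ d al be (n + 1) - Tk P μ d al be t w' (n + 1) := by
      rw [Tk, show n + 1 - 1 = n from rfl]
      have : ∀ i ∈ range n, A P μ d al be t w' (i + 1) * B P μ d al be t w' (n + 1 - (i + 1))
          = A P μ d al be t w' (i + 1) * B P μ d al be t w' (n - i) := by
        intro i hi; congr 2; omega
      rw [Finset.sum_congr rfl this]
      ring
    rw [hT, show n + 1 - (n + 1) = 0 from by omega, show n + 1 - 0 = n + 1 from rfl, A0, B0]
    have hmid : A P μ d al be t w' (n + 1) * P ^ μ + P ^ (μ + d) * B P μ d al be t w' (n + 1)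
        = Tk P μ d al be t w' (n + 1) := by
      match n with
      | 0 =>
        rw [A1, B1, Tk1, pow_add]
        ring
      | (n' + 1) =>
        rw [A_eq, pow_add]
        have h2 := Int.mul_ediv_cancel' (dvd_Tk P μ d al be t w' ht hw (n' + 2) (by omega))
        linear_combination h2
    linear_combination hmid

lemma product (ht : P ^ μ ∣ P ^ d * t ^ 2 - be * t + al)
    (hw : P ^ μ ∣ (be - 2 * P ^ d * t) * w' - 1) :
    (PowerSeries.mk (A P μ d al be t w') : PowerSeries ℤ) * PowerSeries.mk (B P μ d al be t w')
      = PowerSeries.mk (fc P μ d al be) := by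
  apply PowerSeries.ext
  intro k
  rw [PowerSeries.coeff_mul, Finset.Nat.sum_antidiagonal_eq_sum_range_succ_mk]
  simp only [PowerSeries.coeff_mk]
  exact key P μ d al be t w' ht hw k

end Stmt5Aux

theorem stmt_5 (p : ℕ) (hp : p.Prime) (hodd : Odd p) (α β : ℤ)
    (hα : Int.gcd (p : ℤ) α = 1) (hβ : Int.gcd (p : ℤ) β = 1)
    (n m : ℕ) (hn : 1 ≤ n) (hm : 1 ≤ m) (h : 2 * m < n) :
    ∃ a b : PowerSeries ℤ, ¬ IsUnit a ∧ ¬ IsUnit b ∧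
      (PowerSeries.C (R := ℤ)) ((p : ℤ) ^ n) + (PowerSeries.C (R := ℤ)) ((p : ℤ) ^ m * β) * PowerSeries.X +
        (PowerSeries.C (R := ℤ)) α * PowerSeries.X ^ 2 = a * b := by
  set P : ℤ := (p : ℤ) with hP
  set μ : ℕ := m with hμ
  set d : ℕ := n - 2 * m with hd'
  have hd : 1 ≤ d := by omega
  have hcopβ : IsCoprime P β := Int.isCoprime_iff_gcd_eq_one.mpr hβ
  -- inverse of β mod P
  obtain ⟨u, v, huv⟩ := id hcopβ
  have hbe : P ∣ β * v - 1 := ⟨-u, by linarith⟩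
  -- Hensel root t
  obtain ⟨t, ht⟩ := Stmt5Aux.hensel P β α d hd v hbe μ
  -- inverse of (β - 2 P^d t) mod P^μ
  have hpowd : P ^ d = P * P ^ (d - 1) := by
    rw [← pow_succ']
    congr 1
    omega
  have hcopw : IsCoprime P (β - 2 * P ^ d * t) := by
    have : β - 2 * P ^ d * t = β + P * (-(2 * P ^ (d - 1) * t)) := by
      rw [hpowd]; ring
    rw [this]
    exact hcopβ.add_mul_left_right _
  obtain ⟨u', w', huw⟩ := hcopw.pow_left (m := μ)
  have hw : P ^ μ ∣ (β - 2 * P ^ d * t) * w' - 1 := ⟨-u', by linarith⟩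
  have hp2 : (2 : ℤ) ≤ P := by rw [hP]; exact_mod_cast hp.two_le
  refine ⟨PowerSeries.mk (Stmt5Aux.A P μ d α β t w'),
          PowerSeries.mk (Stmt5Aux.B P μ d α β t w'), ?_, ?_, ?_⟩
  · intro hu
    have := (PowerSeries.isUnit_iff_constantCoeff.mp hu)
    rw [show PowerSeries.constantCoeff (R := ℤ) (PowerSeries.mk (Stmt5Aux.A P μ d α β t w'))
        = Stmt5Aux.A P μ d α β t w' 0 from rfl, Stmt5Aux.A0] at this
    have hle : (2 : ℤ) ≤ P ^ (μ + d) := le_trans hp2 (le_self_pow₀ (by linarith) (by omega))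
    rcases Int.isUnit_iff.mp this with h1 | h1 <;> omega
  · intro hu
    have := (PowerSeries.isUnit_iff_constantCoeff.mp hu)
    rw [show PowerSeries.constantCoeff (R := ℤ) (PowerSeries.mk (Stmt5Aux.B P μ d α β t w'))
        = Stmt5Aux.B P μ d α β t w' 0 from rfl, Stmt5Aux.B0] at this
    have hle : (2 : ℤ) ≤ P ^ μ := le_trans hp2 (le_self_pow₀ (by linarith) (by omega))
    rcases Int.isUnit_iff.mp this with h1 | h1 <;> omega
  · rw [Stmt5Aux.product P μ d α β t w' ht hw]
    apply PowerSeries.ext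
    intro k
    have hn2 : n = 2 * μ + d := by omega
    simp only [PowerSeries.coeff_mk, map_add, PowerSeries.coeff_C,
      PowerSeries.coeff_C_mul, PowerSeries.coeff_X, PowerSeries.coeff_X_pow,
      Stmt5Aux.fc, hn2]
    rcases k with _ | _ | _ | k <;> norm_num
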